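/- arXiv:1507.01482 — 5 statements merged into one kernel-verified Lean document; each statement's English description precedes it below -/
import Mathlib

section
/- Fix a prime p and let F be the algebraic closure of the field with p elements. Then for every δ > 0 and every natural number N there exist finite sets P ⊆ F × F of points and L ⊆ F × F of lines with |P| ≥ N and |L| ≥ N such that for all subsets P₀ ⊆ P and L₀ ⊆ L with |P₀| ≥ δ·|P| and |L₀| ≥ δ·|L|, there exist (x,y) ∈ P₀ and (a,b) ∈ L₀ with y = a·x + b. In particular, the conclusion of the strong Erdős–Hajnal statement for point–line incidence-free pairs fails over F. -/
open Polynomial Finset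

/-- Key counting lemma: if `P₀` is a set of points and `L₀` a set of lines in `S × S`
with no incidences, then a Cauchy–Schwarz bound holds. -/
lemma ehkey {F : Type*} [Field F] (S : Finset F)
    (hsub : ∀ a ∈ S, ∀ x ∈ S, ∀ y ∈ S, y - a * x ∈ S)
    (P₀ L₀ : Finset (F × F)) (hP : P₀ ⊆ S ×ˢ S) (hL : L₀ ⊆ S ×ˢ S)
    (hno : ∀ z ∈ P₀, ∀ l ∈ L₀, z.2 ≠ l.1 * z.1 + l.2) :
    (S.card * P₀.card) ^ 2
      ≤ ((S ×ˢ S).card - L₀.card) * (S.card * P₀.card + P₀.card ^ 2) := by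
  classical
  set n : F × F → ℕ := fun l => (P₀.filter fun z => z.2 = l.1 * z.1 + l.2).card with hn
  -- each point of P₀ lies on exactly S.card lines of S ×ˢ S
  have line_count : ∀ z ∈ P₀,
      ((S ×ˢ S).filter fun l => z.2 = l.1 * z.1 + l.2).card = S.card := by
    intro z hz
    obtain ⟨hz1, hz2⟩ := Finset.mem_product.1 (hP hz)
    refine Finset.card_nbij' (fun l => l.1) (fun a => (a, z.2 - a * z.1)) ?_ ?_ ?_ ?_
    · intro l hl
      exact (Finset.mem_product.1 (Finset.mem_filter.1 hl).1).1
    · intro a ha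
      refine Finset.mem_filter.2 ⟨Finset.mem_product.2 ⟨ha, hsub a ha z.1 hz1 z.2 hz2⟩, by ring⟩
    · intro l hl
      have h := (Finset.mem_filter.1 hl).2
      have h2 : z.2 - l.1 * z.1 = l.2 := by linear_combination h
      exact Prod.ext rfl h2
    · intro a ha
      rfl
  -- first moment
  have h1 : ∑ l ∈ S ×ˢ S, n l = S.card * P₀.card := by
    calc ∑ l ∈ S ×ˢ S, n l
        = ∑ l ∈ S ×ˢ S, ∑ z ∈ P₀, if z.2 = l.1 * z.1 + l.2 then 1 else 0 :=
          Finset.sum_congr rfl fun l _ => Finset.card_filter _ _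
      _ = ∑ z ∈ P₀, ∑ l ∈ S ×ˢ S, if z.2 = l.1 * z.1 + l.2 then 1 else 0 :=
          Finset.sum_comm
      _ = ∑ _z ∈ P₀, S.card := by
          refine Finset.sum_congr rfl fun z hz => ?_
          rw [← Finset.card_filter]
          exact line_count z hz
      _ = S.card * P₀.card := by rw [Finset.sum_const, smul_eq_mul, mul_comm]
  -- pair counts
  set cnt : F × F → F × F → ℕ := fun z w =>
    ((S ×ˢ S).filter fun l => z.2 = l.1 * z.1 + l.2 ∧ w.2 = l.1 * w.1 + l.2).card with hcnt
  have hdiag : ∀ z ∈ P₀, cnt z z = S.card := by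
    intro z hz
    have he : ((S ×ˢ S).filter fun l => z.2 = l.1 * z.1 + l.2 ∧ z.2 = l.1 * z.1 + l.2)
        = ((S ×ˢ S).filter fun l => z.2 = l.1 * z.1 + l.2) :=
      Finset.filter_congr fun l _ => and_self_iff
    have : cnt z z
        = ((S ×ˢ S).filter fun l => z.2 = l.1 * z.1 + l.2 ∧ z.2 = l.1 * z.1 + l.2).card := rfl
    rw [this, he]
    exact line_count z hz
  have hoff : ∀ z w : F × F, z ≠ w → cnt z w ≤ 1 := by
    intro z w hzw
    refine Finset.card_le_one.2 ?_
    intro l hl l' hl'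
    obtain ⟨-, e1, e2⟩ := Finset.mem_filter.1 hl
    obtain ⟨-, e3, e4⟩ := Finset.mem_filter.1 hl'
    have hd : (l.1 - l'.1) * (z.1 - w.1) = 0 := by linear_combination e3 - e1 + e2 - e4
    rcases mul_eq_zero.1 hd with h | h
    · have ha : l.1 = l'.1 := sub_eq_zero.1 h
      have hb : l.2 = l'.2 := by linear_combination e3 - e1 - z.1 * h
      exact Prod.ext ha hb
    · exact absurd (Prod.ext (sub_eq_zero.1 h)
        (by linear_combination e1 - e2 + l.1 * h)) hzw
  -- second moment
  have h2 : ∑ l ∈ S ×ˢ S, n l ^ 2 ≤ S.card * P₀.card + P₀.card ^ 2 := by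
    have hid : ∑ l ∈ S ×ˢ S, n l ^ 2 = ∑ z ∈ P₀, ∑ w ∈ P₀, cnt z w := by
      calc ∑ l ∈ S ×ˢ S, n l ^ 2
          = ∑ l ∈ S ×ˢ S, ∑ z ∈ P₀, ∑ w ∈ P₀,
              if z.2 = l.1 * z.1 + l.2 ∧ w.2 = l.1 * w.1 + l.2 then 1 else 0 := by
            refine Finset.sum_congr rfl fun l _ => ?_
            have hnl : n l = ∑ z ∈ P₀, if z.2 = l.1 * z.1 + l.2 then 1 else 0 :=
              Finset.card_filter _ _
            rw [sq, hnl, Finset.sum_mul_sum]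
            refine Finset.sum_congr rfl fun z _ => Finset.sum_congr rfl fun w _ => ?_
            by_cases hA : z.2 = l.1 * z.1 + l.2 <;>
              by_cases hB : w.2 = l.1 * w.1 + l.2 <;> simp [hA, hB]
        _ = ∑ z ∈ P₀, ∑ l ∈ S ×ˢ S, ∑ w ∈ P₀,
              if z.2 = l.1 * z.1 + l.2 ∧ w.2 = l.1 * w.1 + l.2 then 1 else 0 :=
            Finset.sum_comm
        _ = ∑ z ∈ P₀, ∑ w ∈ P₀, ∑ l ∈ S ×ˢ S,
              if z.2 = l.1 * z.1 + l.2 ∧ w.2 = l.1 * w.1 + l.2 then 1 else 0 :=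
            Finset.sum_congr rfl fun z _ => Finset.sum_comm
        _ = ∑ z ∈ P₀, ∑ w ∈ P₀, cnt z w :=
            Finset.sum_congr rfl fun z _ => Finset.sum_congr rfl fun w _ =>
              (Finset.card_filter _ _).symm
    rw [hid]
    have hrow : ∀ z ∈ P₀, ∑ w ∈ P₀, cnt z w ≤ S.card + P₀.card := by
      intro z hz
      rw [← Finset.add_sum_erase P₀ (cnt z) hz]
      have hrest : ∑ w ∈ P₀.erase z, cnt z w ≤ P₀.card := by
        calc ∑ w ∈ P₀.erase z, cnt z w ≤ ∑ _w ∈ P₀.erase z, 1 :=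
              Finset.sum_le_sum fun w hw => hoff z w (Finset.ne_of_mem_erase hw).symm
          _ = (P₀.erase z).card := by simp
          _ ≤ P₀.card := Finset.card_le_card (Finset.erase_subset _ _)
      exact add_le_add (le_of_eq (hdiag z hz)) hrest
    calc ∑ z ∈ P₀, ∑ w ∈ P₀, cnt z w ≤ ∑ _z ∈ P₀, (S.card + P₀.card) :=
          Finset.sum_le_sum hrow
      _ = P₀.card * (S.card + P₀.card) := by rw [Finset.sum_const, smul_eq_mul]
      _ = S.card * P₀.card + P₀.card ^ 2 := by ring
  -- no incidences on L₀
  have h3 : ∀ l ∈ L₀, n l = 0 := by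
    intro l hl
    exact Finset.card_eq_zero.2
      (Finset.filter_eq_empty_iff.2 fun z hz => hno z hz l hl)
  have h4 : ∑ l ∈ (S ×ˢ S) \ L₀, n l = S.card * P₀.card := by
    rw [← h1]
    refine Finset.sum_subset Finset.sdiff_subset fun l hl hnl => ?_
    exact h3 l (by simpa [Finset.mem_sdiff, hl] using hnl)
  -- Cauchy–Schwarz
  have h5 : (∑ l ∈ (S ×ˢ S) \ L₀, n l) ^ 2
      ≤ ((S ×ˢ S) \ L₀).card * ∑ l ∈ (S ×ˢ S) \ L₀, n l ^ 2 :=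
    sq_sum_le_card_mul_sum_sq
  have h6 : ∑ l ∈ (S ×ˢ S) \ L₀, n l ^ 2 ≤ ∑ l ∈ S ×ˢ S, n l ^ 2 :=
    Finset.sum_le_sum_of_subset Finset.sdiff_subset
  have hT : ((S ×ˢ S) \ L₀).card = (S ×ˢ S).card - L₀.card := Finset.card_sdiff_of_subset hL
  calc (S.card * P₀.card) ^ 2 = (∑ l ∈ (S ×ˢ S) \ L₀, n l) ^ 2 := by rw [h4]
    _ ≤ ((S ×ˢ S) \ L₀).card * ∑ l ∈ (S ×ˢ S) \ L₀, n l ^ 2 := h5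
    _ ≤ ((S ×ˢ S).card - L₀.card) * (S.card * P₀.card + P₀.card ^ 2) := by
        rw [hT]
        exact Nat.mul_le_mul le_rfl (h6.trans h2)

/-- Pure real-arithmetic contradiction. -/
lemma ehArith (δ Q m Lr : ℝ) (hδ : 0 < δ) (hQ2 : 2 ≤ Q) (hδQ : 1 < δ ^ 2 * Q)
    (hm : δ * Q ^ 2 ≤ m) (hL : δ * Q ^ 2 ≤ Lr) (hLQ : Lr ≤ Q ^ 2)
    (hkey : (Q * m) ^ 2 ≤ (Q ^ 2 - Lr) * (Q * m + m ^ 2)) : False := by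
  have hQpos : (0 : ℝ) < Q := by linarith
  have hmpos : (0 : ℝ) < m := by nlinarith [mul_pos (mul_pos hδ hQpos) hQpos]
  have step1 : (Q * m) ^ 2 ≤ (Q ^ 2 - δ * Q ^ 2) * (Q * m + m ^ 2) := by
    have hdd : Q ^ 2 - Lr ≤ Q ^ 2 - δ * Q ^ 2 := by linarith
    nlinarith [mul_le_mul_of_nonneg_right hdd (by nlinarith : (0:ℝ) ≤ Q * m + m ^ 2)]
  have hQm : (0 : ℝ) < Q ^ 2 * m := by positivity
  have step2 : m ≤ (1 - δ) * (Q + m) := by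
    have h' : (Q ^ 2 * m) * m ≤ (Q ^ 2 * m) * ((1 - δ) * (Q + m)) := by nlinarith [step1]
    exact le_of_mul_le_mul_left h' hQm
  have hmle : δ * (δ * Q ^ 2) ≤ δ * m := mul_le_mul_of_nonneg_left hm hδ.le
  have hQlt : Q < Q * (δ ^ 2 * Q) := by
    have h := mul_lt_mul_of_pos_left hδQ hQpos
    linarith [h]
  nlinarith [step2, hmle, hQlt, mul_pos hδ hQpos]

/-- Failure of the strong Erdős–Hajnal property for point–line non-incidence
over the algebraic closure of `𝔽_p`. -/
theorem stmt_1 (p : ℕ) [Fact p.Prime] :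
    ∀ δ : ℝ, 0 < δ → ∀ N : ℕ,
      ∃ P L : Finset (AlgebraicClosure (ZMod p) × AlgebraicClosure (ZMod p)),
        N ≤ P.card ∧ N ≤ L.card ∧
        ∀ P₀ ⊆ P, ∀ L₀ ⊆ L,
          δ * (P.card : ℝ) ≤ (P₀.card : ℝ) → δ * (L.card : ℝ) ≤ (L₀.card : ℝ) →
          ∃ q ∈ P₀, ∃ l ∈ L₀, q.2 = l.1 * q.1 + l.2 := by
  classical
  intro δ hδ N
  set F := AlgebraicClosure (ZMod p) with hF
  have hp : 1 < p := (Fact.out : p.Prime).one_lt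
  obtain ⟨n, hn⟩ := pow_unbounded_of_one_lt (N + ⌈δ⁻¹ ^ 2⌉₊ + 1) hp
  have hq1 : 1 < p ^ n := lt_of_le_of_lt (by omega) hn
  have hn0 : n ≠ 0 := by
    rintro rfl
    simp at hq1
  have hpoly : (X ^ p ^ n - X : F[X]) ≠ 0 :=
    FiniteField.X_pow_card_pow_sub_X_ne_zero F hn0 hp
  set S : Finset F := (X ^ p ^ n - X : F[X]).roots.toFinset with hSdef
  have hmem : ∀ x : F, x ∈ S ↔ x ^ p ^ n = x := by
    intro x
    rw [hSdef, Multiset.mem_toFinset, Polynomial.mem_roots hpoly]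
    simp [Polynomial.IsRoot, sub_eq_zero]
  have hsep : (X ^ p ^ n - X : F[X]).Separable :=
    galois_poly_separable p (p ^ n) (dvd_pow_self p hn0)
  have hcard : S.card = p ^ n := by
    rw [hSdef, Multiset.toFinset_card_of_nodup (Polynomial.nodup_roots hsep),
      (Polynomial.splits_iff_card_roots).1 (IsAlgClosed.splits _),
      FiniteField.X_pow_card_pow_sub_X_natDegree_eq F hn0 hp]
  have hsub : ∀ a ∈ S, ∀ x ∈ S, ∀ y ∈ S, y - a * x ∈ S := by
    intro a ha x hx y hy
    rw [hmem] at ha hx hy ⊢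
    rw [sub_pow_char_pow, mul_pow, ha, hx, hy]
  have hNcard : N ≤ (S ×ˢ S).card := by
    rw [Finset.card_product, hcard]
    calc N ≤ p ^ n := le_of_lt (lt_of_le_of_lt (by omega) hn)
      _ ≤ p ^ n * p ^ n := Nat.le_mul_of_pos_left _ (by positivity)
  refine ⟨S ×ˢ S, S ×ˢ S, hNcard, hNcard, ?_⟩
  intro P₀ hP₀ L₀ hL₀ hPc hLc
  by_contra hcon
  push_neg at hcon
  have hkey := ehkey S hsub P₀ L₀ hP₀ hL₀ hcon
  have hLle : L₀.card ≤ (S ×ˢ S).card := Finset.card_le_card hL₀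
  set Q : ℝ := (S.card : ℝ) with hQ
  set m : ℝ := (P₀.card : ℝ) with hm
  set Lr : ℝ := (L₀.card : ℝ) with hLrdef
  have hPcard : ((S ×ˢ S).card : ℝ) = Q ^ 2 := by
    rw [Finset.card_product]
    push_cast
    ring
  have hkeyR : (Q * m) ^ 2 ≤ (Q ^ 2 - Lr) * (Q * m + m ^ 2) := by
    have h0 := (Nat.cast_le (α := ℝ)).2 hkey
    push_cast [Nat.cast_sub hLle] at h0
    rw [hPcard] at h0
    exact h0
  rw [hPcard] at hPc hLc
  have hQ2 : (2 : ℝ) ≤ Q := by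
    rw [hQ, hcard]
    exact_mod_cast hq1
  have hδQ : 1 < δ ^ 2 * Q := by
    have h1 : (δ⁻¹ ^ 2 : ℝ) < Q := by
      calc (δ⁻¹ ^ 2 : ℝ) ≤ (⌈δ⁻¹ ^ 2⌉₊ : ℝ) := Nat.le_ceil _
        _ < Q := by
          rw [hQ, hcard]
          exact_mod_cast lt_of_le_of_lt (by omega) hn
    have h2 : (0 : ℝ) < δ ^ 2 := by positivity
    calc (1 : ℝ) = δ ^ 2 * δ⁻¹ ^ 2 := by field_simp
      _ < δ ^ 2 * Q := mul_lt_mul_of_pos_left h1 h2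
  have hLQ : Lr ≤ Q ^ 2 := by
    rw [← hPcard, hLrdef]
    exact_mod_cast hLle
  exact ehArith δ Q m Lr hδ hQ2 hδQ hPc hLc hLQ hkeyR
end

section
/- Let F be a finite field with |F| = q and let δ be a real number with 0 < δ ≤ 1 and δ²·q > 1 − δ. Then for all subsets P ⊆ F × F and L ⊆ F × F with |P| ≥ δ·q² and |L| ≥ δ·q², there exist a point (x,y) ∈ P and a line (a,b) ∈ L with y = a·x + b. -/
set_option maxHeartbeats 1600000 in
/-- In a finite field `F` with `|F| = q`, if `0 < δ ≤ 1` and `δ² q > 1 - δ`, then any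
point set and line set of size at least `δ q²` contain an incident point–line pair. -/
theorem stmt_2 (F : Type*) [Field F] [Fintype F] (δ : ℝ)
    (hδ0 : 0 < δ) (hδ1 : δ ≤ 1)
    (hq : 1 - δ < δ ^ 2 * (Fintype.card F : ℝ)) :
    ∀ P L : Finset (F × F),
      δ * (Fintype.card F : ℝ) ^ 2 ≤ (P.card : ℝ) →
      δ * (Fintype.card F : ℝ) ^ 2 ≤ (L.card : ℝ) →
      ∃ q ∈ P, ∃ l ∈ L, q.2 = l.1 * q.1 + l.2 := by
  classical
  intro P L hP hL
  by_contra hcon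
  push_neg at hcon
  set q : ℕ := Fintype.card F with hqdef
  have hq0 : 0 < q := Fintype.card_pos
  have hQ0 : (0:ℝ) < (q:ℝ) := by exact_mod_cast hq0
  -- number of lines of L through a point
  set d : F × F → ℕ := fun p => (L.filter (fun l => p.2 = l.1 * p.1 + l.2)).card with hd
  have hd0 : ∀ p ∈ P, d p = 0 := by
    intro p hp
    simp only [hd, Finset.card_eq_zero, Finset.filter_eq_empty_iff]
    intro l hl
    exact hcon p hp l hl
  -- each line contains exactly q points
  have hline : ∀ l : F × F,
      (Finset.univ.filter (fun p : F × F => p.2 = l.1 * p.1 + l.2)).card = q := by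
    intro l
    rw [hqdef, ← Finset.card_univ (α := F)]
    apply Finset.card_bij' (fun (p : F × F) _ => p.1)
      (fun (x : F) _ => (x, l.1 * x + l.2))
    · intro p hp; exact Finset.mem_univ _
    · intro x hx
      simp
    · intro p hp
      simp only [Finset.mem_filter] at hp
      exact Prod.ext rfl hp.2.symm
    · intro x hx; rfl
  -- two distinct lines share at most one point
  have hcommon : ∀ l l' : F × F, l ≠ l' →
      (Finset.univ.filter
        (fun p : F × F => p.2 = l.1 * p.1 + l.2 ∧ p.2 = l'.1 * p.1 + l'.2)).card ≤ 1 := by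
    intro l l' hne
    apply Finset.card_le_one.mpr
    intro p hp p' hp'
    simp only [Finset.mem_filter] at hp hp'
    obtain ⟨-, h1, h2⟩ := hp
    obtain ⟨-, h1', h2'⟩ := hp'
    by_cases ha : l.1 = l'.1
    · exfalso
      apply hne
      have hb : l.2 = l'.2 := by
        have := h1.symm.trans h2
        rw [ha] at this
        exact add_left_cancel this
      exact Prod.ext ha hb
    · have ha' : l.1 - l'.1 ≠ 0 := sub_ne_zero.mpr ha
      have hx : p.1 = p'.1 := by
        apply mul_left_cancel₀ ha'
        have e1 : (l.1 - l'.1) * p.1 = l'.2 - l.2 := by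
          have := h1.symm.trans h2; ring_nf; linear_combination this
        have e2 : (l.1 - l'.1) * p'.1 = l'.2 - l.2 := by
          have := h1'.symm.trans h2'; ring_nf; linear_combination this
        rw [e1, e2]
      have hy : p.2 = p'.2 := by rw [h1, h1', hx]
      exact Prod.ext hx hy
  -- total incidence count
  have hsum1 : ∑ p : F × F, d p = L.card * q := by
    have : ∀ p : F × F, d p = ∑ l ∈ L, if p.2 = l.1 * p.1 + l.2 then 1 else 0 := by
      intro p; simp only [hd]; exact Finset.card_filter _ _
    simp only [this]
    rw [Finset.sum_comm]
    have : ∀ l ∈ L, (∑ p : F × F, if p.2 = l.1 * p.1 + l.2 then 1 else 0) = q := by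
      intro l _
      rw [← Finset.card_filter]
      exact hline l
    rw [Finset.sum_congr rfl this, Finset.sum_const, smul_eq_mul]
  -- second moment bound
  have hsum2 : ∑ p : F × F, d p * d p ≤ L.card * (q + L.card) := by
    have hdp : ∀ p : F × F, d p * d p
        = ∑ l ∈ L, ∑ l' ∈ L,
            if p.2 = l.1 * p.1 + l.2 ∧ p.2 = l'.1 * p.1 + l'.2 then 1 else 0 := by
      intro p
      have : d p = ∑ l ∈ L, if p.2 = l.1 * p.1 + l.2 then 1 else 0 := by
        simp only [hd]; exact Finset.card_filter _ _
      rw [this, Finset.sum_mul_sum]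
      apply Finset.sum_congr rfl; intro l _
      apply Finset.sum_congr rfl; intro l' _
      by_cases h1 : p.2 = l.1 * p.1 + l.2 <;> by_cases h2 : p.2 = l'.1 * p.1 + l'.2 <;>
        simp [h1, h2]
    calc ∑ p : F × F, d p * d p
        = ∑ l ∈ L, ∑ l' ∈ L, (Finset.univ.filter
            (fun p : F × F => p.2 = l.1 * p.1 + l.2 ∧ p.2 = l'.1 * p.1 + l'.2)).card := by
          simp only [hdp]
          rw [Finset.sum_comm]
          apply Finset.sum_congr rfl; intro l _
          rw [Finset.sum_comm]
          apply Finset.sum_congr rfl; intro l' _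
          rw [← Finset.card_filter]
      _ ≤ ∑ l ∈ L, ∑ l' ∈ L, ((if l = l' then q else 0) + 1) := by
          apply Finset.sum_le_sum; intro l _
          apply Finset.sum_le_sum; intro l' _
          by_cases h : l = l'
          · subst h
            simp only [if_pos rfl]
            calc (Finset.univ.filter (fun p : F × F =>
                    p.2 = l.1 * p.1 + l.2 ∧ p.2 = l.1 * p.1 + l.2)).card
                ≤ (Finset.univ.filter (fun p : F × F => p.2 = l.1 * p.1 + l.2)).card := by
                  apply Finset.card_le_card
                  intro p hp
                  simp only [Finset.mem_filter] at hp ⊢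
                  exact ⟨hp.1, hp.2.1⟩
              _ = q := hline l
              _ ≤ q + 1 := Nat.le_succ q
          · simp only [if_neg h, zero_add]
            exact hcommon l l' h
      _ = L.card * (q + L.card) := by
          have : ∀ l ∈ L, (∑ l' ∈ L, ((if l = l' then q else 0) + 1)) = q + L.card := by
            intro l hl
            rw [Finset.sum_add_distrib, Finset.sum_const, smul_eq_mul, mul_one,
              Finset.sum_ite_eq, if_pos hl]
          rw [Finset.sum_congr rfl this, Finset.sum_const, smul_eq_mul]
  -- pass to the reals, Cauchy–Schwarz on the complement of P
  set S : Finset (F × F) := Finset.univ \ P with hS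
  have hsum1' : ∑ p ∈ S, ((d p : ℝ)) = (L.card : ℝ) * q := by
    have heq : ∑ p ∈ S, ((d p : ℝ)) = ∑ p : F × F, ((d p : ℝ)) := by
      apply Finset.sum_subset (Finset.subset_univ S)
      intro p _ hpS
      have hpP : p ∈ P := by
        by_contra hpP
        exact hpS (Finset.mem_sdiff.mpr ⟨Finset.mem_univ p, hpP⟩)
      simp [hd0 p hpP]
    rw [heq]
    exact_mod_cast congrArg (Nat.cast : ℕ → ℝ) hsum1
  have hCS : ((L.card : ℝ) * q) ^ 2 ≤ (S.card : ℝ) * ∑ p ∈ S, (d p : ℝ) ^ 2 := by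
    rw [← hsum1']
    exact_mod_cast sq_sum_le_card_mul_sum_sq (s := S) (f := fun p => (d p : ℝ))
  have hsum2' : ∑ p ∈ S, (d p : ℝ) ^ 2 ≤ (L.card : ℝ) * (q + L.card) := by
    calc ∑ p ∈ S, (d p : ℝ) ^ 2 ≤ ∑ p : F × F, (d p : ℝ) ^ 2 := by
          apply Finset.sum_le_sum_of_subset_of_nonneg (Finset.subset_univ S)
          intro p _ _; positivity
      _ ≤ (L.card : ℝ) * (q + L.card) := by
          have := hsum2
          have hcast : (∑ p : F × F, (d p : ℝ) ^ 2) = ((∑ p : F × F, d p * d p : ℕ) : ℝ) := by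
            push_cast; apply Finset.sum_congr rfl; intro p _; ring
          rw [hcast]
          exact_mod_cast hsum2
  have hScard : (S.card : ℝ) = (q : ℝ) ^ 2 - P.card := by
    have hsub : P ⊆ Finset.univ := Finset.subset_univ P
    rw [hS, Finset.card_sdiff_of_subset hsub, Finset.card_univ, Fintype.card_prod]
    have hle : P.card ≤ q * q := by
      calc P.card ≤ (Finset.univ : Finset (F × F)).card := Finset.card_le_card hsub
        _ = q * q := by rw [Finset.card_univ, Fintype.card_prod]
    rw [Nat.cast_sub hle]
    push_cast [Nat.cast_sub hle]
    ring
  -- final arithmetic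
  have hPle : (P.card : ℝ) ≤ (q : ℝ) ^ 2 := by
    have : (0:ℝ) ≤ (S.card : ℝ) := Nat.cast_nonneg _
    linarith [hScard]
  have hL0 : (0:ℝ) < (L.card : ℝ) := by nlinarith
  have key : ((L.card : ℝ) * q) ^ 2 ≤ ((q:ℝ)^2 - P.card) * ((L.card : ℝ) * (q + L.card)) := by
    calc ((L.card : ℝ) * q) ^ 2 ≤ (S.card : ℝ) * ∑ p ∈ S, (d p : ℝ) ^ 2 := hCS
      _ ≤ ((q:ℝ)^2 - P.card) * ((L.card : ℝ) * (q + L.card)) := by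
          rw [← hScard]
          apply mul_le_mul_of_nonneg_left hsum2' (Nat.cast_nonneg _)
  -- derive the contradiction
  set Q : ℝ := (q : ℝ)
  set A : ℝ := (P.card : ℝ)
  set B : ℝ := (L.card : ℝ)
  have h1 : B * Q ^ 2 ≤ (Q^2 - A) * (Q + B) := by
    have := key
    nlinarith [hL0, sq_nonneg Q]
  have h2 : (Q^2 - A) * (Q + B) ≤ (1 - δ) * Q^2 * (Q + B) := by
    have hQB : (0:ℝ) ≤ Q + B := by positivity
    have : Q^2 - A ≤ (1 - δ) * Q^2 := by nlinarith
    nlinarith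
  have hQ2 : (0:ℝ) < Q ^ 2 := by positivity
  have hfac : Q ^ 2 * 0 ≤ Q ^ 2 * ((1 - δ) * (Q + B) - B) := by linarith [h1, h2]
  have h3 : (0:ℝ) ≤ (1 - δ) * (Q + B) - B := le_of_mul_le_mul_left hfac hQ2
  have h4 : δ * B ≤ (1 - δ) * Q := by nlinarith [h3]
  have h5 : δ * (δ * Q ^ 2) ≤ δ * B := mul_le_mul_of_nonneg_left hL hδ0.le
  have h7 : (1 - δ) * Q < δ ^ 2 * Q * Q := mul_lt_mul_of_pos_right hq hQ0
  nlinarith [h4, h5, h7]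
end

section
/- Let n, m, k be natural numbers with m ≥ 1, and let R be a relation on {0,…,n−1} × {0,…,m−1} such that for every i < n the number of indices j with j + 1 < m and R(i,j) not equivalent to R(i,j+1) is at most k (i.e. each row alternates at most k times). Then there exist a subset A ⊆ {0,…,n−1} with |A| ≥ n / (2(k+1)) and a set of consecutive indices B ⊆ {0,…,m−1} with |B| ≥ ⌊m/(k+1)⌋ such that the pair (A,B) is R-homogeneous: either R(i,j) holds for all i ∈ A, j ∈ B, or R(i,j) fails for all i ∈ A, j ∈ B. -/
private lemma const_on (P : ℕ → Prop) (a b : ℕ)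
    (h : ∀ j, a ≤ j → j + 1 < b → (P j ↔ P (j + 1))) :
    ∀ j, a ≤ j → j < b → (P j ↔ P a) := by
  intro j
  induction j with
  | zero => intro ha _; rw [Nat.le_zero.mp ha]
  | succ j ih =>
    intro ha hb
    rcases Nat.lt_or_ge a (j + 1) with h1 | h1
    · have haj : a ≤ j := Nat.lt_succ_iff.mp h1
      rw [← h j haj hb]
      exact ih haj (Nat.lt_of_succ_lt hb)
    · rw [Nat.le_antisymm ha h1]

/-- If each row of a relation on `{0,…,n-1} × {0,…,m-1}` alternates at most `k` times, then
there are a subset `A` of the rows with `|A| ≥ n/(2(k+1))` and an interval `B` of columns with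
`|B| ≥ ⌊m/(k+1)⌋` such that `(A, B)` is `R`-homogeneous. -/
theorem stmt_4 (n m k : ℕ) (hm : 1 ≤ m) (R : ℕ → ℕ → Prop)
    (halt : ∀ i < n, {j | j + 1 < m ∧ ¬(R i j ↔ R i (j + 1))}.ncard ≤ k) :
    ∃ A : Finset ℕ, A ⊆ Finset.range n ∧ (n : ℝ) / (2 * (k + 1)) ≤ (A.card : ℝ) ∧
      ∃ a b : ℕ, Finset.Ico a b ⊆ Finset.range m ∧ m / (k + 1) ≤ (Finset.Ico a b).card ∧
        ((∀ i ∈ A, ∀ j ∈ Finset.Ico a b, R i j) ∨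
         (∀ i ∈ A, ∀ j ∈ Finset.Ico a b, ¬ R i j)) := by
  classical
  set t := m / (k + 1) with ht
  by_cases ht0 : t = 0
  · refine ⟨Finset.range n, le_refl _, ?_, 0, 0, by simp, ?_, Or.inl (by simp)⟩
    · rw [Finset.card_range]
      apply div_le_self (by positivity)
      have : (0 : ℝ) ≤ (k : ℝ) := Nat.cast_nonneg k
      linarith
    · simp [ht0]
  · have ht1 : 1 ≤ t := Nat.one_le_iff_ne_zero.mpr ht0
    have htm : (k + 1) * t ≤ m := by
      rw [ht, mul_comm]; exact Nat.div_mul_le_self m (k + 1)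
    -- each row is constant on some interval of length t
    have key : ∀ i, i < n → ∃ l, l < k + 1 ∧
        ∀ j, l * t ≤ j → j + 1 < l * t + t → (R i j ↔ R i (j + 1)) := by
      intro i hi
      by_contra hcon
      push_neg at hcon
      set S := {j | j + 1 < m ∧ ¬(R i j ↔ R i (j + 1))} with hSdef
      have hfin : S.Finite := by
        apply (Set.finite_Iio m).subset
        intro j hj
        exact Nat.lt_of_succ_lt hj.1
      have hF : hfin.toFinset.card ≤ k := by
        rw [← Set.ncard_eq_toFinset_card S hfin]
        exact halt i hi
      -- build injection from range (k+1) into the alternation set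
      have hsel : ∀ l, l < k + 1 →
          ∃ j, j ∈ hfin.toFinset ∧ l * t ≤ j ∧ j + 1 < l * t + t := by
        intro l hl
        obtain ⟨j, hj1, hj2, hj3⟩ := hcon l hl
        refine ⟨j, ?_, hj1, hj2⟩
        rw [Set.Finite.mem_toFinset]
        refine ⟨?_, by tauto⟩
        calc j + 1 < l * t + t := hj2
          _ = (l + 1) * t := (Nat.succ_mul l t).symm
          _ ≤ (k + 1) * t := Nat.mul_le_mul_right t (Nat.succ_le_succ (Nat.le_of_lt_succ hl))
          _ ≤ m := htm
      choose! g hgF hg1 hg2 using hsel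
      have hdiv : ∀ l, l < k + 1 → g l / t = l := by
        intro l h
        apply Nat.div_eq_of_lt_le (hg1 l h)
        have := hg2 l h
        calc g l < l * t + t := by omega
          _ = (l + 1) * t := (Nat.succ_mul l t).symm
      have hcard := Finset.card_le_card_of_injOn g
        (fun l hl => hgF l (Finset.mem_range.mp hl))
        (by
          intro l₁ h₁ l₂ h₂ heq
          simp only [Finset.mem_coe, Finset.mem_range] at h₁ h₂
          rw [← hdiv l₁ h₁, ← hdiv l₂ h₂, heq])
      rw [Finset.card_range] at hcard
      omega
    choose! g hg1 hg2 using key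
    -- classify rows by (interval index, truth value)
    set f : ℕ → ℕ × Prop := fun i => (g i, R i (g i * t)) with hf
    set T : Finset (ℕ × Prop) := Finset.range (k + 1) ×ˢ {True, False} with hT
    have hmaps : ∀ i ∈ Finset.range n, f i ∈ T := by
      intro i hi
      rw [Finset.mem_range] at hi
      rw [hT, Finset.mem_product]
      constructor
      · exact Finset.mem_range.mpr (hg1 i hi)
      · by_cases h : R i (g i * t)
        · simp [hf, eq_true h]
        · simp [hf, eq_false h]
    have hTcard : T.card = (k + 1) * 2 := by
      rw [hT, Finset.card_product, Finset.card_range]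
      congr 1
      rw [Finset.card_insert_of_notMem (by simp), Finset.card_singleton]
    have hTne : T.Nonempty := by
      refine ⟨(0, True), ?_⟩
      rw [hT, Finset.mem_product]
      exact ⟨Finset.mem_range.mpr (Nat.succ_pos k), by simp⟩
    -- pigeonhole: some fiber has size ≥ n / (2(k+1))
    obtain ⟨y, hyT, hymax⟩ := T.exists_max_image
      (fun y => ((Finset.range n).filter (fun i => f i = y)).card) hTne
    have hsum : ∑ z ∈ T, ((Finset.range n).filter (fun i => f i = z)).card = n := by
      have := (Finset.card_eq_sum_card_fiberwise hmaps).symm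
      rwa [Finset.card_range] at this
    have hpig : n ≤ T.card * ((Finset.range n).filter (fun i => f i = y)).card := by
      have h2 := Finset.sum_le_card_nsmul T
        (fun z => ((Finset.range n).filter (fun i => f i = z)).card)
        ((Finset.range n).filter (fun i => f i = y)).card hymax
      calc n = ∑ z ∈ T, ((Finset.range n).filter (fun i => f i = z)).card := hsum.symm
        _ ≤ T.card * ((Finset.range n).filter (fun i => f i = y)).card := by
            simpa [smul_eq_mul] using h2
    set A : Finset ℕ := (Finset.range n).filter (fun i => f i = y) with hA
    obtain ⟨l, v⟩ := y
    have hyT' := Finset.mem_product.mp hyT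
    have hl : l < k + 1 := Finset.mem_range.mp hyT'.1
    refine ⟨A, Finset.filter_subset _ _, ?_, l * t, l * t + t, ?_, ?_, ?_⟩
    · rw [div_le_iff₀ (by positivity)]
      have : (n : ℝ) ≤ ((k + 1) * 2 : ℕ) * (A.card : ℕ) := by
        exact_mod_cast hTcard ▸ hpig
      push_cast at this ⊢
      linarith
    · intro j hj
      rw [Finset.mem_Ico] at hj
      rw [Finset.mem_range]
      calc j < l * t + t := hj.2
        _ = (l + 1) * t := (Nat.succ_mul l t).symm
        _ ≤ (k + 1) * t := Nat.mul_le_mul_right t hl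
        _ ≤ m := htm
    · rw [Nat.card_Ico]; omega
    · -- homogeneity
      have hmem : ∀ i ∈ A, i < n ∧ g i = l ∧ R i (g i * t) = v := by
        intro i hi
        rw [hA, Finset.mem_filter, Finset.mem_range] at hi
        have heq : (g i, R i (g i * t)) = ((l, v) : ℕ × Prop) := hi.2
        exact ⟨hi.1, congrArg Prod.fst heq, congrArg Prod.snd heq⟩
      have hconst : ∀ i ∈ A, ∀ j ∈ Finset.Ico (l * t) (l * t + t), (R i j ↔ v) := by
        intro i hi j hj
        obtain ⟨hin, hgl, hgv⟩ := hmem i hi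
        rw [Finset.mem_Ico] at hj
        have halt' := hg2 i hin
        rw [hgl] at halt' hgv
        have := const_on (R i) (l * t) (l * t + t) halt' j hj.1 hj.2
        rw [this, hgv]
      have hv : v = True ∨ v = False := by
        have := hyT'.2
        simp only [Finset.mem_insert, Finset.mem_singleton] at this
        exact this
      rcases hv with hv | hv
      · exact Or.inl (fun i hi j hj => ((hconst i hi j hj).mpr (hv ▸ trivial)))
      · refine Or.inr (fun i hi j hj hR => ?_)
        have := (hconst i hi j hj).mp hR
        rw [hv] at this
        exact this
end

section
/- Let n, m, s be natural numbers, let λ_n and λ_m denote Lebesgue measure on ℝ^n and ℝ^m respectively, and let R ⊆ ℝ^n × ℝ^m × ℝ^s be a semialgebraic set. Then there is a constant δ > 0 such that for every parameter c ∈ ℝ^s there exist Lebesgue-measurable sets A ⊆ [0,1]^n and B ⊆ [0,1]^m with λ_n(A) ≥ δ and λ_m(B) ≥ δ such that the pair (A, B) is homogeneous for the relation R_c = {(x,y) : (x,y,c) ∈ R}: either A × B ⊆ R_c or (A × B) ∩ R_c = ∅. -/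
/-- Finite Boolean combinations of a family `S` of subsets of `α`. -/
inductive BoolComb {α : Type*} (S : Set (Set α)) : Set α → Prop
  | basic (s : Set α) (hs : s ∈ S) : BoolComb S s
  | compl (s : Set α) (h : BoolComb S s) : BoolComb S sᶜ
  | inter (s t : Set α) (hs : BoolComb S s) (ht : BoolComb S t) : BoolComb S (s ∩ t)
  | union (s t : Set α) (hs : BoolComb S s) (ht : BoolComb S t) : BoolComb S (s ∪ t)

/-- A subset of `ℝ^n × ℝ^m × ℝ^s` is semialgebraic if it is a finite Boolean combination of
zero-sets and positivity-sets of real polynomials in `n + m + s` variables. -/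
def IsSemialgebraic3 (n m s : ℕ) (R : Set ((Fin n → ℝ) × (Fin m → ℝ) × (Fin s → ℝ))) : Prop :=
  BoolComb
    {S | ∃ p : MvPolynomial (Fin n ⊕ Fin m ⊕ Fin s) ℝ,
      S = {z | MvPolynomial.eval (Sum.elim z.1 (Sum.elim z.2.1 z.2.2)) p = 0} ∨
      S = {z | 0 < MvPolynomial.eval (Sum.elim z.1 (Sum.elim z.2.1 z.2.2)) p}} R

open MeasureTheory

set_option linter.unusedSectionVars false
set_option maxHeartbeats 1000000
open MvPolynomial

/-- A nonzero real multivariate polynomial is nonzero on a dense set. -/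
theorem dense_eval_ne_zero_fin : ∀ (N : ℕ) (q : MvPolynomial (Fin N) ℝ), q ≠ 0 →
    Dense {x : Fin N → ℝ | MvPolynomial.eval x q ≠ 0} := by
  intro N
  induction N with
  | zero =>
    intro q hq
    obtain ⟨a, rfl⟩ := MvPolynomial.C_surjective (Fin 0) q
    have ha : a ≠ 0 := fun h => hq (by simp [h])
    have : {x : Fin 0 → ℝ | MvPolynomial.eval x (C a) ≠ 0} = Set.univ := by
      ext x; simp [ha]
    rw [this]; exact dense_univ
  | succ N ih =>
    intro q hq
    rw [Metric.dense_iff]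
    intro x₀ ε hε
    set q' := finSuccEquiv ℝ N q with hq'
    have hq'0 : q' ≠ 0 := by
      intro h
      exact hq ((map_eq_zero_iff _ (AlgEquiv.injective _)).mp h)
    obtain ⟨d, hd⟩ : ∃ d, q'.coeff d ≠ 0 := by
      by_contra h
      push_neg at h
      exact hq'0 (Polynomial.ext fun d => by simpa using h d)
    -- find y near tail x₀ where coefficient d is nonzero
    have hdense := ih (q'.coeff d) hd
    rw [Metric.dense_iff] at hdense
    obtain ⟨y, hy_ball, hy_ne⟩ := hdense (Fin.tail x₀) ε hε
    -- the one-variable polynomial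
    set P := Polynomial.map (MvPolynomial.eval y) q' with hP
    have hP0 : P ≠ 0 := by
      intro h
      apply hy_ne
      have := congrArg (fun r => Polynomial.coeff r d) h
      simpa [hP, Polynomial.coeff_map] using this
    -- find t near x₀ 0 avoiding roots
    have hfin := Polynomial.finite_setOf_isRoot hP0
    have hIoo : (Set.Ioo (x₀ 0 - ε) (x₀ 0 + ε)).Infinite := Set.Ioo_infinite (by linarith)
    obtain ⟨t, htI, htr⟩ := (hIoo.diff hfin).nonempty
    refine ⟨Fin.cons t y, ?_, ?_⟩
    · rw [Metric.mem_ball, dist_pi_lt_iff hε]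
      intro i
      refine Fin.cases ?_ ?_ i
      · have h1 := htI.1; have h2 := htI.2
        simp only [Fin.cons_zero]
        rw [Real.dist_eq, abs_sub_lt_iff]
        constructor <;> linarith
      · intro j
        have := (dist_pi_lt_iff hε).mp (Metric.mem_ball.mp hy_ball) j
        simpa [Fin.cons_succ, Fin.tail, dist_comm] using this
    · show MvPolynomial.eval (Fin.cons t y) q ≠ 0
      rw [MvPolynomial.eval_eq_eval_mv_eval']
      exact htr

theorem dense_eval_ne_zero {σ : Type*} [Fintype σ] (q : MvPolynomial σ ℝ) (hq : q ≠ 0) :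
    Dense {x : σ → ℝ | MvPolynomial.eval x q ≠ 0} := by
  classical
  obtain ⟨e⟩ : Nonempty (σ ≃ Fin (Fintype.card σ)) := ⟨Fintype.equivFin σ⟩
  have hq2 : rename e q ≠ 0 := fun h => hq (MvPolynomial.rename_injective _ e.injective (by simpa using h))
  have hdense := dense_eval_ne_zero_fin _ _ hq2
  rw [Metric.dense_iff] at hdense ⊢
  intro x₀ ε hε
  obtain ⟨x', hx'ball, hx'ne⟩ := hdense (x₀ ∘ e.symm) ε hε
  refine ⟨x' ∘ e, ?_, ?_⟩
  · rw [Metric.mem_ball, dist_pi_lt_iff hε]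
    intro v
    have := (dist_pi_lt_iff hε).mp (Metric.mem_ball.mp hx'ball) (e v)
    simpa [dist_comm] using this
  · show MvPolynomial.eval (x' ∘ e) q ≠ 0
    have : MvPolynomial.eval x' (rename e q) ≠ 0 := hx'ne
    rwa [MvPolynomial.eval_rename] at this

noncomputable section FP
open Finset
variable {ι : Type*} [Fintype ι] [DecidableEq ι]

def Fpoly (T : Finset (ι →₀ ℕ)) (u : T → ℝ) (x : ι → ℝ) : ℝ :=
  ∑ β ∈ T.attach, u β * ∏ v, x v ^ ((β : ι →₀ ℕ) v)

theorem Fpoly_continuous (T : Finset (ι →₀ ℕ)) (u : T → ℝ) : Continuous (Fpoly T u) := by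
  apply continuous_finset_sum
  intro β _
  exact (continuous_const.mul (continuous_finset_prod _ fun v _ => (continuous_apply v).pow _))

theorem Fpoly_zero (T : Finset (ι →₀ ℕ)) (x : ι → ℝ) : Fpoly T (0 : T → ℝ) x = 0 := by
  simp [Fpoly]

theorem Fpoly_smul (T : Finset (ι →₀ ℕ)) (r : ℝ) (u : T → ℝ) (x : ι → ℝ) :
    Fpoly T (r • u) x = r * Fpoly T u x := by
  simp [Fpoly, Finset.mul_sum, mul_assoc]

def qOf (T : Finset (ι →₀ ℕ)) (u : T → ℝ) : MvPolynomial ι ℝ :=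
  ∑ β ∈ T.attach, MvPolynomial.monomial (β : ι →₀ ℕ) (u β)

theorem eval_qOf (T : Finset (ι →₀ ℕ)) (u : T → ℝ) (x : ι → ℝ) :
    MvPolynomial.eval x (qOf T u) = Fpoly T u x := by
  rw [qOf, map_sum, Fpoly]
  refine Finset.sum_congr rfl fun β _ => ?_
  rw [MvPolynomial.eval_monomial, Finsupp.prod_pow]

theorem qOf_ne_zero (T : Finset (ι →₀ ℕ)) (u : T → ℝ) (hu : u ≠ 0) : qOf T u ≠ 0 := by
  obtain ⟨β₀, hβ₀⟩ : ∃ β₀ : T, u β₀ ≠ 0 := by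
    by_contra h; push_neg at h; exact hu (funext h)
  intro h
  apply hβ₀
  have := congrArg (MvPolynomial.coeff (β₀ : ι →₀ ℕ)) h
  rw [qOf] at this
  simp only [MvPolynomial.coeff_sum, MvPolynomial.coeff_monomial, MvPolynomial.coeff_zero] at this
  rwa [Finset.sum_eq_single β₀ (fun b _ hb => if_neg (fun he => hb (Subtype.ext he)))
    (fun hb => absurd (Finset.mem_attach _ _) hb), if_pos rfl] at this

theorem Fpoly_coeff_eq_eval (T : Finset (ι →₀ ℕ)) (q : MvPolynomial ι ℝ)
    (hq : q.support ⊆ T) (x : ι → ℝ) :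
    Fpoly T (fun β => MvPolynomial.coeff (β : ι →₀ ℕ) q) x = MvPolynomial.eval x q := by
  rw [MvPolynomial.eval_eq' x q, Fpoly]
  rw [Finset.sum_attach T (fun β => MvPolynomial.coeff β q * ∏ v, x v ^ β v)]
  exact (Finset.sum_subset hq (fun β _ hβ => by
    rw [MvPolynomial.notMem_support_iff.mp hβ, zero_mul])).symm

theorem Fpoly_dist (T : Finset (ι →₀ ℕ)) (u u' : T → ℝ) (x : ι → ℝ)
    (hx : ∀ v, x v ∈ Set.Icc (0:ℝ) 1) :
    |Fpoly T u x - Fpoly T u' x| ≤ T.card * ‖u - u'‖ := by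
  rw [Fpoly, Fpoly, ← Finset.sum_sub_distrib]
  calc |∑ β ∈ T.attach, (u β * ∏ v, x v ^ ((β : ι →₀ ℕ) v) - u' β * ∏ v, x v ^ ((β : ι →₀ ℕ) v))|
      ≤ ∑ β ∈ T.attach, |u β * ∏ v, x v ^ ((β : ι →₀ ℕ) v) - u' β * ∏ v, x v ^ ((β : ι →₀ ℕ) v)| :=
        Finset.abs_sum_le_sum_abs _ _
    _ ≤ ∑ _β ∈ T.attach, ‖u - u'‖ := by
        refine Finset.sum_le_sum fun β _ => ?_
        rw [← sub_mul, abs_mul]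
        have h1 : |u β - u' β| ≤ ‖u - u'‖ := by
          have := norm_le_pi_norm (u - u') β
          simpa using this
        have h2 : |∏ v, x v ^ ((β : ι →₀ ℕ) v)| ≤ 1 := by
          rw [abs_of_nonneg (Finset.prod_nonneg fun v _ => pow_nonneg (hx v).1 _)]
          exact Finset.prod_le_one (fun v _ => pow_nonneg (hx v).1 _)
            (fun v _ => pow_le_one₀ (hx v).1 (hx v).2)
        calc |u β - u' β| * |∏ v, x v ^ ((β : ι →₀ ℕ) v)| ≤ ‖u - u'‖ * 1 :=
              mul_le_mul h1 h2 (abs_nonneg _) (norm_nonneg _)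
          _ = ‖u - u'‖ := mul_one _
    _ = T.card * ‖u - u'‖ := by rw [Finset.sum_const, Finset.card_attach, nsmul_eq_mul]
end FP

noncomputable section MAIN
open Finset
variable {ι : Type*} [Fintype ι] [DecidableEq ι]

def GoodBox (T : Finset (ι →₀ ℕ)) (k : ℕ) (γ : ℝ) (u : Fin k → (T → ℝ)) : Prop :=
  ∃ w : ι → ℝ, (∀ v, 0 ≤ w v ∧ w v + γ ≤ 1) ∧ ∀ i,
    (∀ x ∈ Set.Icc w (fun v => w v + γ), 0 < Fpoly T (u i) x) ∨
    (∀ x ∈ Set.Icc w (fun v => w v + γ), Fpoly T (u i) x < 0)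

theorem GoodBox.mono {T : Finset (ι →₀ ℕ)} {k : ℕ} {γ γ' : ℝ} {u : Fin k → (T → ℝ)}
    (h : GoodBox T k γ u) (h0 : 0 ≤ γ') (hle : γ' ≤ γ) : GoodBox T k γ' u := by
  obtain ⟨w, hw, hs⟩ := h
  have hsub : Set.Icc w (fun v => w v + γ') ⊆ Set.Icc w (fun v => w v + γ) := by
    intro x hx
    refine ⟨hx.1, fun v => le_trans (hx.2 v) ?_⟩
    show w v + γ' ≤ w v + γ
    linarith
  exact ⟨w, fun v => ⟨(hw v).1, by linarith [(hw v).2]⟩,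
    fun i => (hs i).imp (fun h x hx => h x (hsub hx)) (fun h x hx => h x (hsub hx))⟩

theorem exists_pos_le_fin {k : ℕ} (f : Fin k → ℝ) (hf : ∀ i, 0 < f i) :
    ∃ r > 0, ∀ i, r ≤ f i := by
  rcases isEmpty_or_nonempty (Fin k) with h | h
  · exact ⟨1, one_pos, fun i => (h.false i).elim⟩
  · refine ⟨Finset.univ.inf' Finset.univ_nonempty f, ?_, fun i => Finset.inf'_le _ (mem_univ i)⟩
    exact (Finset.lt_inf'_iff _).mpr fun i _ => hf i

theorem goodBox_of_ne_zero (T : Finset (ι →₀ ℕ)) (k : ℕ) (u : Fin k → (T → ℝ))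
    (hu : ∀ i, u i ≠ 0) : ∃ j : ℕ, GoodBox T k (1 / (j + 1)) u := by
  classical
  -- dense set where all Fpoly are nonzero
  have hD : Dense (⋂ i, {x : ι → ℝ | Fpoly T (u i) x ≠ 0}) := by
    refine dense_iInter_of_isOpen (fun i => ?_) (fun i => ?_)
    · exact (isOpen_compl_singleton).preimage (Fpoly_continuous T (u i))
    · have := dense_eval_ne_zero (qOf T (u i)) (qOf_ne_zero T (u i) (hu i))
      have hset : {x : ι → ℝ | MvPolynomial.eval x (qOf T (u i)) ≠ 0}
          = {x | Fpoly T (u i) x ≠ 0} := by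
        ext x; simp [eval_qOf]
      rwa [hset] at this
  set U : Set (ι → ℝ) := Set.pi Set.univ (fun _ => Set.Ioo (0:ℝ) 1) with hU
  have hUopen : IsOpen U := isOpen_set_pi Set.finite_univ (fun _ _ => isOpen_Ioo)
  have hUne : U.Nonempty := ⟨fun _ => 1/2, fun v _ => by norm_num⟩
  obtain ⟨x₀, hx₀U, hx₀D⟩ := hD.inter_open_nonempty U hUopen hUne
  have hx₀ : ∀ i, Fpoly T (u i) x₀ ≠ 0 := by
    intro i; exact Set.mem_iInter.mp hx₀D i
  -- open neighborhood with fixed signs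
  set V : Set (ι → ℝ) := (⋂ i, if 0 < Fpoly T (u i) x₀ then {x | 0 < Fpoly T (u i) x}
      else {x | Fpoly T (u i) x < 0}) ∩ U with hV
  have hVopen : IsOpen V := by
    refine IsOpen.inter (isOpen_iInter_of_finite fun i => ?_) hUopen
    split_ifs
    · exact isOpen_lt continuous_const (Fpoly_continuous T (u i))
    · exact isOpen_lt (Fpoly_continuous T (u i)) continuous_const
  have hx₀V : x₀ ∈ V := by
    refine ⟨Set.mem_iInter.mpr fun i => ?_, hx₀U⟩
    split_ifs with h
    · exact h
    · exact lt_of_le_of_ne (not_lt.mp h) (hx₀ i)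
  obtain ⟨ε, hε, hball⟩ := Metric.isOpen_iff.mp hVopen x₀ hx₀V
  obtain ⟨j, hj⟩ := exists_nat_one_div_lt hε
  refine ⟨j, ?_⟩
  set γ : ℝ := 1 / (j + 1) with hγ
  have hγpos : 0 < γ := by positivity
  set η : ℝ := γ / 2 with hη
  have hηpos : 0 < η := by positivity
  set w : ι → ℝ := fun v => x₀ v - η with hw
  have hbox : Set.Icc w (fun v => w v + γ) ⊆ V := by
    intro x hx
    apply hball
    rw [Metric.mem_ball]
    have : dist x x₀ ≤ η := by
      rw [dist_pi_le_iff hηpos.le]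
      intro v
      rw [Real.dist_eq, abs_le]
      have h1 := hx.1 v
      have h2 := hx.2 v
      simp only [hw] at h1 h2
      constructor <;> [linarith; linarith]
    calc dist x x₀ ≤ η := this
      _ < ε := by rw [hη]; linarith [hj]
  have hwmem : w ∈ Set.Icc w (fun v => w v + γ) :=
    ⟨le_refl _, fun v => by show w v ≤ w v + γ; linarith⟩
  have htop : (fun v => w v + γ) ∈ Set.Icc w (fun v => w v + γ) :=
    ⟨fun v => by show w v ≤ w v + γ; linarith, le_refl _⟩
  have hwU : w ∈ U := (hbox hwmem).2
  have htU : (fun v => w v + γ) ∈ U := (hbox htop).2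
  refine ⟨w, fun v => ?_, fun i => ?_⟩
  · have h1 := hwU v (Set.mem_univ v)
    have h2 := htU v (Set.mem_univ v)
    exact ⟨h1.1.le, h2.2.le⟩
  · by_cases h : 0 < Fpoly T (u i) x₀
    · left
      intro x hx
      have := Set.mem_iInter.mp (hbox hx).1 i
      rwa [if_pos h] at this
    · right
      intro x hx
      have := Set.mem_iInter.mp (hbox hx).1 i
      rwa [if_neg h] at this

theorem goodBox_isOpen (T : Finset (ι →₀ ℕ)) (k : ℕ) (γ : ℝ) (hγ : 0 < γ) :
    IsOpen {u : Fin k → (T → ℝ) | GoodBox T k γ u} := by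
  rw [Metric.isOpen_iff]
  rintro u ⟨w, hw, hs⟩
  set box := Set.Icc w (fun v => w v + γ) with hbox
  have hboxne : box.Nonempty := ⟨w, le_refl _, fun v => by show w v ≤ w v + γ; linarith⟩
  have hboxcpt : IsCompact box := isCompact_Icc
  have hbox01 : ∀ x ∈ box, ∀ v, x v ∈ Set.Icc (0:ℝ) 1 := by
    intro x hx v
    exact ⟨le_trans (hw v).1 (hx.1 v), le_trans (hx.2 v) (hw v).2⟩
  have hmin : ∀ i, ∃ mi > 0, (∀ x ∈ box, mi ≤ Fpoly T (u i) x) ∨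
      (∀ x ∈ box, Fpoly T (u i) x ≤ -mi) := by
    intro i
    rcases hs i with h | h
    · obtain ⟨x0, hx0, hx0min⟩ := hboxcpt.exists_isMinOn hboxne
        (Fpoly_continuous T (u i)).continuousOn
      exact ⟨Fpoly T (u i) x0, h x0 hx0, Or.inl fun x hx => hx0min hx⟩
    · obtain ⟨x0, hx0, hx0max⟩ := hboxcpt.exists_isMaxOn hboxne
        (Fpoly_continuous T (u i)).continuousOn
      refine ⟨-(Fpoly T (u i) x0), by linarith [h x0 hx0], Or.inr fun x hx => ?_⟩
      have := hx0max hx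
      simpa using this
  choose mi hmi hsign using hmin
  obtain ⟨r, hr, hrle⟩ := exists_pos_le_fin mi hmi
  refine ⟨r / (T.card + 1), by positivity, ?_⟩
  intro u' hu'
  have hkey : ∀ i, ∀ x ∈ box, |Fpoly T (u' i) x - Fpoly T (u i) x| < r := by
    intro i x hx
    have h1 : ‖u' i - u i‖ ≤ dist u' u := by
      rw [← dist_eq_norm]
      exact dist_le_pi_dist u' u i
    have h2 := Fpoly_dist T (u' i) (u i) x (hbox01 x hx)
    have hTc : (0:ℝ) ≤ T.card := Nat.cast_nonneg _
    have h3 : (T.card : ℝ) * ‖u' i - u i‖ ≤ (T.card : ℝ) * (r / (T.card + 1)) := by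
      apply mul_le_mul_of_nonneg_left _ hTc
      exact le_of_lt (lt_of_le_of_lt h1 (Metric.mem_ball.mp hu'))
    have h4 : (T.card : ℝ) * (r / (T.card + 1)) < r := by
      rw [mul_div_assoc'] -- (T.card * r)/ (T.card+1)
      rw [div_lt_iff₀ (by positivity)]
      nlinarith
    linarith [h2]
  refine ⟨w, hw, fun i => ?_⟩
  rcases hsign i with h | h
  · left
    intro x hx
    have := hkey i x hx
    have h5 := h x hx
    have h6 := hrle i
    have := abs_lt.mp this
    linarith [this.1]
  · right
    intro x hx
    have h7 := hkey i x hx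
    have h5 := h x hx
    have h6 := hrle i
    have := abs_lt.mp h7
    linarith [this.2]
end MAIN

theorem main_box {ι : Type*} [Fintype ι] [DecidableEq ι] (T : Finset (ι →₀ ℕ)) (k : ℕ) :
    ∃ γ : ℝ, 0 < γ ∧ γ ≤ 1 ∧ ∀ u : Fin k → (T → ℝ), ∃ w : ι → ℝ,
      (∀ v, 0 ≤ w v ∧ w v + γ ≤ 1) ∧ ∀ i,
        (∀ x ∈ Set.Icc w (fun v => w v + γ), 0 < Fpoly T (u i) x) ∨
        (∀ x ∈ Set.Icc w (fun v => w v + γ), Fpoly T (u i) x < 0) ∨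
        (∀ x ∈ Set.Icc w (fun v => w v + γ), Fpoly T (u i) x = 0) := by
  classical
  rcases T.eq_empty_or_nonempty with rfl | hT
  · refine ⟨1, one_pos, le_refl _, fun u => ⟨0, fun v => by norm_num, fun i => ?_⟩⟩
    right; right
    intro x _
    have : u i = 0 := funext fun β => absurd β.2 (Finset.notMem_empty _)
    rw [this, Fpoly_zero]
  · -- compactness over the sphere
    have hKc : IsCompact {u : Fin k → ({x // x ∈ T} → ℝ) | ∀ i, ‖u i‖ = 1} := by
      have : {u : Fin k → ({x // x ∈ T} → ℝ) | ∀ i, ‖u i‖ = 1}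
          = Set.pi Set.univ (fun _ : Fin k => Metric.sphere (0 : {x // x ∈ T} → ℝ) 1) := by
        ext u
        simp [Set.mem_pi, mem_sphere_zero_iff_norm]
      rw [this]
      exact isCompact_univ_pi fun _ => isCompact_sphere 0 1
    have hcover : {u : Fin k → ({x // x ∈ T} → ℝ) | ∀ i, ‖u i‖ = 1}
        ⊆ ⋃ j : ℕ, {u | GoodBox T k (1 / (j + 1)) u} := by
      intro u hu
      obtain ⟨j, hj⟩ := goodBox_of_ne_zero T k u
        (fun i h => by have := hu i; rw [h] at this; simp at this)
      exact Set.mem_iUnion.mpr ⟨j, hj⟩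
    obtain ⟨t, ht⟩ := hKc.elim_finite_subcover _
      (fun j : ℕ => goodBox_isOpen T k (1 / (j + 1)) (by positivity)) hcover
    set J := t.sup id with hJ
    set γ : ℝ := 1 / (J + 1) with hγ
    have hγpos : 0 < γ := by positivity
    have hγle : γ ≤ 1 := by
      rw [hγ, div_le_one (by positivity)]
      linarith [Nat.cast_nonneg (α := ℝ) J]
    refine ⟨γ, hγpos, hγle, fun u => ?_⟩
    -- normalize
    obtain ⟨β₀, hβ₀⟩ := hT
    have hne : Nonempty {x // x ∈ T} := ⟨⟨β₀, hβ₀⟩⟩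
    set u' : Fin k → ({x // x ∈ T} → ℝ) := fun i =>
      if u i = 0 then (fun _ => 1) else ‖u i‖⁻¹ • u i with hu'
    have hu'K : ∀ i, ‖u' i‖ = 1 := by
      intro i
      have hdef : u' i = if u i = 0 then (fun _ => 1) else ‖u i‖⁻¹ • u i := rfl
      rw [hdef]
      split_ifs with h
      · rw [pi_norm_const]; norm_num
      · rw [norm_smul, norm_inv, norm_norm, inv_mul_cancel₀ (norm_ne_zero_iff.mpr h)]
    obtain ⟨j, hjt, hjG⟩ := Set.mem_iUnion₂.mp (ht hu'K)
    have hjJ : (j : ℝ) ≤ J := Nat.cast_le.mpr (Finset.le_sup (f := id) hjt)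
    have hgood : GoodBox T k γ u' := by
      refine GoodBox.mono hjG hγpos.le ?_
      rw [hγ]
      apply one_div_le_one_div_of_le (by positivity)
      linarith
    obtain ⟨w, hw, hs⟩ := hgood
    refine ⟨w, hw, fun i => ?_⟩
    by_cases h : u i = 0
    · right; right
      intro x _
      rw [h, Fpoly_zero]
    · have hui : u i = ‖u i‖ • u' i := by
        have hdef : u' i = if u i = 0 then (fun _ => 1) else ‖u i‖⁻¹ • u i := rfl
        rw [hdef, if_neg h, smul_smul, mul_inv_cancel₀ (norm_ne_zero_iff.mpr h), one_smul]
      have hpos : (0:ℝ) < ‖u i‖ := norm_pos_iff.mpr h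
      rcases hs i with hsi | hsi
      · left
        intro x hx
        rw [hui, Fpoly_smul]
        exact mul_pos hpos (hsi x hx)
      · right; left
        intro x hx
        rw [hui, Fpoly_smul]
        exact mul_neg_of_pos_of_neg hpos (hsi x hx)

noncomputable section SUBST
open MvPolynomial
variable {n m s : ℕ}

/-- substitution of the parameter `c` -/
def gmap (n m s : ℕ) (c : Fin s → ℝ) : (Fin n ⊕ (Fin m ⊕ Fin s)) → MvPolynomial (Fin n ⊕ Fin m) ℝ :=
  Sum.elim (fun i => X (Sum.inl i)) (Sum.elim (fun j => X (Sum.inr j)) (fun t => C (c t)))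

theorem eval_aeval_gen {σ τ : Type*} (f : σ → MvPolynomial τ ℝ) (x : τ → ℝ)
    (p : MvPolynomial σ ℝ) :
    MvPolynomial.eval x (MvPolynomial.aeval f p) = MvPolynomial.eval (fun i => MvPolynomial.eval x (f i)) p := by
  induction p using MvPolynomial.induction_on with
  | C a => simp
  | add p q hp hq => simp only [map_add, hp, hq]
  | mul_X p v hp => simp only [map_mul, MvPolynomial.aeval_X, MvPolynomial.eval_X, hp]

theorem eval_gmap (c : Fin s → ℝ) (a : Fin n → ℝ) (b : Fin m → ℝ)
    (p : MvPolynomial (Fin n ⊕ (Fin m ⊕ Fin s)) ℝ) :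
    MvPolynomial.eval (Sum.elim a b) (MvPolynomial.aeval (gmap n m s c) p)
      = MvPolynomial.eval (Sum.elim a (Sum.elim b c)) p := by
  rw [eval_aeval_gen]
  have hfun : (fun i => MvPolynomial.eval (Sum.elim a b) (gmap n m s c i))
      = Sum.elim a (Sum.elim b c) := by
    funext v
    rcases v with i | v
    · simp [gmap]
    · rcases v with j | t <;> simp [gmap]
  rw [hfun]

/-- the injection of xy-variables into all variables -/
def emb (n m s : ℕ) : (Fin n ⊕ Fin m) → (Fin n ⊕ (Fin m ⊕ Fin s)) :=
  Sum.map id Sum.inl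

theorem emb_injective : Function.Injective (emb n m s) :=
  Function.Injective.sumMap Function.injective_id Sum.inl_injective

/-- restriction of a monomial to the xy-variables -/
def restr (n m s : ℕ) (d : (Fin n ⊕ (Fin m ⊕ Fin s)) →₀ ℕ) : (Fin n ⊕ Fin m) →₀ ℕ :=
  Finsupp.comapDomain (emb n m s) d (emb_injective.injOn)

theorem restr_apply (d : (Fin n ⊕ (Fin m ⊕ Fin s)) →₀ ℕ) (v : Fin n ⊕ Fin m) :
    restr n m s d v = d (emb n m s v) := rfl

theorem aeval_gmap_monomial (c : Fin s → ℝ) (d : (Fin n ⊕ (Fin m ⊕ Fin s)) →₀ ℕ) (a : ℝ) :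
    MvPolynomial.aeval (gmap n m s c) (MvPolynomial.monomial d a)
      = MvPolynomial.monomial (restr n m s d)
          (a * ∏ t : Fin s, c t ^ d (Sum.inr (Sum.inr t))) := by
  classical
  rw [MvPolynomial.aeval_monomial, MvPolynomial.monomial_eq]
  rw [Finsupp.prod_fintype _ _ (fun v => pow_zero _), Finsupp.prod_fintype _ _ (fun v => pow_zero _)]
  rw [Fintype.prod_sum_type, Fintype.prod_sum_type]
  have hC : (∏ t : Fin s, gmap n m s c (Sum.inr (Sum.inr t)) ^ d (Sum.inr (Sum.inr t)))
      = MvPolynomial.C (∏ t : Fin s, c t ^ d (Sum.inr (Sum.inr t))) := by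
    rw [map_prod]
    refine Finset.prod_congr rfl fun t _ => ?_
    simp [gmap]
  rw [hC]
  have h1 : ∀ i : Fin n, gmap n m s c (Sum.inl i) ^ d (Sum.inl i)
      = (X (Sum.inl i) : MvPolynomial (Fin n ⊕ Fin m) ℝ) ^ restr n m s d (Sum.inl i) := by
    intro i; simp [gmap, restr_apply, emb]
  have h2 : ∀ j : Fin m, gmap n m s c (Sum.inr (Sum.inl j)) ^ d (Sum.inr (Sum.inl j))
      = (X (Sum.inr j) : MvPolynomial (Fin n ⊕ Fin m) ℝ) ^ restr n m s d (Sum.inr j) := by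
    intro j; simp [gmap, restr_apply, emb]
  rw [Finset.prod_congr rfl (fun i _ => h1 i), Finset.prod_congr rfl (fun j _ => h2 j)]
  rw [map_mul, algebraMap_eq, Fintype.prod_sum_type]
  ring

theorem support_aeval_gmap (c : Fin s → ℝ) (p : MvPolynomial (Fin n ⊕ (Fin m ⊕ Fin s)) ℝ) :
    (MvPolynomial.aeval (gmap n m s c) p).support ⊆ p.support.image (restr n m s) := by
  classical
  conv_lhs => rw [← MvPolynomial.support_sum_monomial_coeff p]
  rw [map_sum]
  refine Finset.Subset.trans MvPolynomial.support_sum ?_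
  intro β hβ
  rw [Finset.mem_biUnion] at hβ
  obtain ⟨d, hd, hβd⟩ := hβ
  rw [aeval_gmap_monomial] at hβd
  have h := MvPolynomial.support_monomial_subset hβd
  rw [Finset.mem_image]
  exact ⟨d, hd, (Finset.mem_singleton.mp h).symm⟩
end SUBST

theorem exists_sign_list {n m s : ℕ} {R : Set ((Fin n → ℝ) × (Fin m → ℝ) × (Fin s → ℝ))}
    (hR : IsSemialgebraic3 n m s R) :
    ∃ L : List (MvPolynomial (Fin n ⊕ Fin m ⊕ Fin s) ℝ),
      ∀ z w : (Fin n → ℝ) × (Fin m → ℝ) × (Fin s → ℝ),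
        (∀ p ∈ L,
          (MvPolynomial.eval (Sum.elim z.1 (Sum.elim z.2.1 z.2.2)) p = 0 ↔
            MvPolynomial.eval (Sum.elim w.1 (Sum.elim w.2.1 w.2.2)) p = 0) ∧
          (0 < MvPolynomial.eval (Sum.elim z.1 (Sum.elim z.2.1 z.2.2)) p ↔
            0 < MvPolynomial.eval (Sum.elim w.1 (Sum.elim w.2.1 w.2.2)) p)) →
        (z ∈ R ↔ w ∈ R) := by
  induction hR with
  | basic S hs =>
    obtain ⟨p, hp | hp⟩ := hs
    · refine ⟨[p], fun z w h => ?_⟩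
      obtain ⟨h1, _⟩ := h p (List.mem_singleton.mpr rfl)
      rw [hp]
      exact h1
    · refine ⟨[p], fun z w h => ?_⟩
      obtain ⟨_, h2⟩ := h p (List.mem_singleton.mpr rfl)
      rw [hp]
      exact h2
  | compl S h ih =>
    obtain ⟨L, hL⟩ := ih
    exact ⟨L, fun z w h => not_iff_not.mpr (hL z w h)⟩
  | inter S U hs ht ihs iht =>
    obtain ⟨L1, hL1⟩ := ihs
    obtain ⟨L2, hL2⟩ := iht
    refine ⟨L1 ++ L2, fun z w h => ?_⟩
    have h1 := hL1 z w (fun p hp => h p (List.mem_append_left _ hp))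
    have h2 := hL2 z w (fun p hp => h p (List.mem_append_right _ hp))
    exact and_congr h1 h2
  | union S U hs ht ihs iht =>
    obtain ⟨L1, hL1⟩ := ihs
    obtain ⟨L2, hL2⟩ := iht
    refine ⟨L1 ++ L2, fun z w h => ?_⟩
    have h1 := hL1 z w (fun p hp => h p (List.mem_append_left _ hp))
    have h2 := hL2 z w (fun p hp => h p (List.mem_append_right _ hp))
    exact or_congr h1 h2

open MeasureTheory

/-- Definable homogeneous pairs of positive Lebesgue measure in the unit cubes, for
semialgebraic relations, uniformly in the parameter `c`. -/
theorem stmt_8 (n m s : ℕ) (R : Set ((Fin n → ℝ) × (Fin m → ℝ) × (Fin s → ℝ)))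
    (hR : IsSemialgebraic3 n m s R) :
    ∃ δ : ℝ, 0 < δ ∧
      ∀ c : Fin s → ℝ,
        ∃ (A : Set (Fin n → ℝ)) (B : Set (Fin m → ℝ)),
          MeasurableSet A ∧ MeasurableSet B ∧
          A ⊆ Set.Icc (0 : Fin n → ℝ) 1 ∧ B ⊆ Set.Icc (0 : Fin m → ℝ) 1 ∧
          ENNReal.ofReal δ ≤ volume A ∧ ENNReal.ofReal δ ≤ volume B ∧
          ((∀ a ∈ A, ∀ b ∈ B, (a, b, c) ∈ R) ∨ (∀ a ∈ A, ∀ b ∈ B, (a, b, c) ∉ R)) := by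
  classical
  obtain ⟨L, hL⟩ := exists_sign_list hR
  -- the finite set of possible xy-monomials
  set T : Finset ((Fin n ⊕ Fin m) →₀ ℕ) :=
    L.toFinset.biUnion (fun q => q.support.image (restr n m s)) with hT
  obtain ⟨γ, hγ0, hγ1, hbox⟩ := main_box T L.length
  refine ⟨γ ^ (n + m), by positivity, fun c => ?_⟩
  -- coefficient vectors of the substituted polynomials
  set uvec : Fin L.length → ({β // β ∈ T} → ℝ) := fun i β =>
    MvPolynomial.coeff (β : (Fin n ⊕ Fin m) →₀ ℕ)
      (MvPolynomial.aeval (gmap n m s c) (L.get i)) with huvec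
  obtain ⟨w, hw, hsigns⟩ := hbox uvec
  -- the two boxes
  set wA : Fin n → ℝ := fun i => w (Sum.inl i) with hwA
  set wB : Fin m → ℝ := fun j => w (Sum.inr j) with hwB
  refine ⟨Set.Icc wA (fun i => wA i + γ), Set.Icc wB (fun j => wB j + γ),
    measurableSet_Icc, measurableSet_Icc, ?_, ?_, ?_, ?_, ?_⟩
  · intro a ha
    exact ⟨fun i => le_trans (hw (Sum.inl i)).1 (ha.1 i),
      fun i => le_trans (ha.2 i) (hw (Sum.inl i)).2⟩
  · intro b hb
    exact ⟨fun j => le_trans (hw (Sum.inr j)).1 (hb.1 j),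
      fun j => le_trans (hb.2 j) (hw (Sum.inr j)).2⟩
  · rw [Real.volume_Icc_pi]
    have : ∀ i : Fin n, ENNReal.ofReal ((fun i => wA i + γ) i - wA i) = ENNReal.ofReal γ := by
      intro i; congr 1; ring
    rw [Finset.prod_congr rfl (fun i _ => this i), Finset.prod_const, Finset.card_univ,
      Fintype.card_fin, ← ENNReal.ofReal_pow hγ0.le]
    exact ENNReal.ofReal_le_ofReal
      (pow_le_pow_of_le_one hγ0.le hγ1 (Nat.le_add_right n m))
  · rw [Real.volume_Icc_pi]
    have : ∀ j : Fin m, ENNReal.ofReal ((fun j => wB j + γ) j - wB j) = ENNReal.ofReal γ := by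
      intro j; congr 1; ring
    rw [Finset.prod_congr rfl (fun j _ => this j), Finset.prod_const, Finset.card_univ,
      Fintype.card_fin, ← ENNReal.ofReal_pow hγ0.le]
    exact ENNReal.ofReal_le_ofReal
      (pow_le_pow_of_le_one hγ0.le hγ1 (Nat.add_comm n m ▸ Nat.le_add_right m n))
  · -- homogeneity
    have hmem : ∀ a ∈ Set.Icc wA (fun i => wA i + γ), ∀ b ∈ Set.Icc wB (fun j => wB j + γ),
        Sum.elim a b ∈ Set.Icc w (fun v => w v + γ) := by
      intro a ha b hb
      constructor
      · intro v
        rcases v with i | j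
        · exact ha.1 i
        · exact hb.1 j
      · intro v
        rcases v with i | j
        · exact ha.2 i
        · exact hb.2 j
    -- value of Fpoly equals polynomial evaluation
    have hval : ∀ (i : Fin L.length) (x : (Fin n ⊕ Fin m) → ℝ),
        Fpoly T (uvec i) x = MvPolynomial.eval x (MvPolynomial.aeval (gmap n m s c) (L.get i)) := by
      intro i x
      apply Fpoly_coeff_eq_eval
      refine Finset.Subset.trans (support_aeval_gmap c (L.get i)) ?_
      have hmemL : L.get i ∈ L := List.get_mem L i
      exact Finset.subset_biUnion_of_mem
        (fun q : MvPolynomial (Fin n ⊕ Fin m ⊕ Fin s) ℝ => q.support.image (restr n m s))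
        (List.mem_toFinset.mpr hmemL)
    -- sign coherence on the box
    have hcoh : ∀ a ∈ Set.Icc wA (fun i => wA i + γ), ∀ b ∈ Set.Icc wB (fun j => wB j + γ),
        ((a, b, c) ∈ R ↔ (wA, wB, c) ∈ R) := by
      intro a ha b hb
      apply hL
      intro p hp
      obtain ⟨i, hi⟩ := List.mem_iff_get.mp hp
      subst hi
      have hx1 : Sum.elim a b ∈ Set.Icc w (fun v => w v + γ) := hmem a ha b hb
      have hx2 : Sum.elim wA wB ∈ Set.Icc w (fun v => w v + γ) := by
        refine hmem wA ⟨le_refl _, fun i => by show wA i ≤ wA i + γ; linarith⟩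
          wB ⟨le_refl _, fun j => by show wB j ≤ wB j + γ; linarith⟩
      have he1 : MvPolynomial.eval (Sum.elim a (Sum.elim b c)) (L.get i)
          = Fpoly T (uvec i) (Sum.elim a b) := by
        rw [hval, eval_gmap]
      have he2 : MvPolynomial.eval (Sum.elim wA (Sum.elim wB c)) (L.get i)
          = Fpoly T (uvec i) (Sum.elim wA wB) := by
        rw [hval, eval_gmap]
      show (MvPolynomial.eval (Sum.elim a (Sum.elim b c)) (L.get i) = 0 ↔ _) ∧ _
      rw [he1, he2]
      rcases hsigns i with h | h | h
      · have h1 := h _ hx1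
        have h2 := h _ hx2
        constructor
        · constructor <;> intro hh <;> [linarith; linarith]
        · constructor <;> intro _ <;> [exact h2; exact h1]
      · have h1 := h _ hx1
        have h2 := h _ hx2
        constructor
        · constructor <;> intro hh <;> [linarith; linarith]
        · constructor <;> intro hh <;> [linarith; linarith]
      · rw [h _ hx1, h _ hx2]
        exact ⟨Iff.rfl, Iff.rfl⟩
    by_cases hR0 : (wA, wB, c) ∈ R
    · left
      intro a ha b hb
      exact (hcoh a ha b hb).mpr hR0
    · right
      intro a ha b hb
      exact fun hab => hR0 ((hcoh a ha b hb).mp hab)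
end

section
/- Let n, m be natural numbers and let R ⊆ ℤ^n × ℤ^m be a relation which is a finite Boolean combination of sets of the following three forms (in the combined variables z = (z₁,…,z_{n+m})): {z : a₁z₁ + ⋯ + a_{n+m}z_{n+m} = a₀}, {z : a₁z₁ + ⋯ + a_{n+m}z_{n+m} > a₀}, and {z : a₁z₁ + ⋯ + a_{n+m}z_{n+m} ≡ a₀ (mod d)}, where a₀, a₁, …, a_{n+m} ∈ ℤ and d ≥ 1. Then there is a constant δ > 0 such that for all finite sets A ⊆ ℤ^n and B ⊆ ℤ^m there exist A₀ ⊆ A and B₀ ⊆ B with |A₀| ≥ δ·|A|, |B₀| ≥ δ·|B|, and the pair (A₀, B₀) is R-homogeneous. -/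
open Finset

section SEH
variable {α β : Type*}

/-- Strong Erdős–Hajnal property for a relation. -/
def SEH (R : Set (α × β)) : Prop :=
  ∃ δ : ℝ, 0 < δ ∧
    ∀ (A : Finset α) (B : Finset β),
      ∃ A₀ ⊆ A, ∃ B₀ ⊆ B,
        δ * (A.card : ℝ) ≤ (A₀.card : ℝ) ∧ δ * (B.card : ℝ) ≤ (B₀.card : ℝ) ∧
        ((∀ a ∈ A₀, ∀ b ∈ B₀, (a, b) ∈ R) ∨ (∀ a ∈ A₀, ∀ b ∈ B₀, (a, b) ∉ R))

theorem SEH.compl {R : Set (α × β)} (h : SEH R) : SEH Rᶜ := by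
  obtain ⟨δ, hδ, h⟩ := h
  refine ⟨δ, hδ, fun A B => ?_⟩
  obtain ⟨A₀, hA₀, B₀, hB₀, h1, h2, h3⟩ := h A B
  exact ⟨A₀, hA₀, B₀, hB₀, h1, h2, h3.symm.imp (fun H a ha b hb => H a ha b hb)
    (fun H a ha b hb => not_not_intro (H a ha b hb))⟩

theorem SEH.refine {S T : Set (α × β)} (hS : SEH S) (hT : SEH T) :
    ∃ δ : ℝ, 0 < δ ∧
      ∀ (A : Finset α) (B : Finset β),
        ∃ A₀ ⊆ A, ∃ B₀ ⊆ B,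
          δ * (A.card : ℝ) ≤ (A₀.card : ℝ) ∧ δ * (B.card : ℝ) ≤ (B₀.card : ℝ) ∧
          ((∀ a ∈ A₀, ∀ b ∈ B₀, (a, b) ∈ S) ∨ (∀ a ∈ A₀, ∀ b ∈ B₀, (a, b) ∉ S)) ∧
          ((∀ a ∈ A₀, ∀ b ∈ B₀, (a, b) ∈ T) ∨ (∀ a ∈ A₀, ∀ b ∈ B₀, (a, b) ∉ T)) := by
  obtain ⟨δ₁, hδ₁, h1⟩ := hS
  obtain ⟨δ₂, hδ₂, h2⟩ := hT
  refine ⟨δ₁ * δ₂, mul_pos hδ₁ hδ₂, fun A B => ?_⟩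
  obtain ⟨A₁, hA₁, B₁, hB₁, c1, c2, hhomS⟩ := h1 A B
  obtain ⟨A₀, hA₀, B₀, hB₀, d1, d2, hhomT⟩ := h2 A₁ B₁
  refine ⟨A₀, hA₀.trans hA₁, B₀, hB₀.trans hB₁, ?_, ?_, ?_, hhomT⟩
  · calc δ₁ * δ₂ * A.card = δ₂ * (δ₁ * A.card) := by ring
      _ ≤ δ₂ * A₁.card := by nlinarith
      _ ≤ A₀.card := d1
  · calc δ₁ * δ₂ * B.card = δ₂ * (δ₁ * B.card) := by ring
      _ ≤ δ₂ * B₁.card := by nlinarith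
      _ ≤ B₀.card := d2
  · exact hhomS.imp (fun H a ha b hb => H a (hA₀ ha) b (hB₀ hb))
      (fun H a ha b hb => H a (hA₀ ha) b (hB₀ hb))

theorem SEH.inter {S T : Set (α × β)} (hS : SEH S) (hT : SEH T) : SEH (S ∩ T) := by
  obtain ⟨δ, hδ, h⟩ := hS.refine hT
  refine ⟨δ, hδ, fun A B => ?_⟩
  obtain ⟨A₀, hA₀, B₀, hB₀, c1, c2, hS', hT'⟩ := h A B
  refine ⟨A₀, hA₀, B₀, hB₀, c1, c2, ?_⟩
  rcases hS' with hS' | hS'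
  · rcases hT' with hT' | hT'
    · exact Or.inl fun a ha b hb => ⟨hS' a ha b hb, hT' a ha b hb⟩
    · exact Or.inr fun a ha b hb H => hT' a ha b hb H.2
  · exact Or.inr fun a ha b hb H => hS' a ha b hb H.1

theorem SEH.union {S T : Set (α × β)} (hS : SEH S) (hT : SEH T) : SEH (S ∪ T) := by
  obtain ⟨δ, hδ, h⟩ := hS.refine hT
  refine ⟨δ, hδ, fun A B => ?_⟩
  obtain ⟨A₀, hA₀, B₀, hB₀, c1, c2, hS', hT'⟩ := h A B
  refine ⟨A₀, hA₀, B₀, hB₀, c1, c2, ?_⟩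
  rcases hS' with hS' | hS'
  · exact Or.inl fun a ha b hb => Or.inl (hS' a ha b hb)
  · rcases hT' with hT' | hT'
    · exact Or.inl fun a ha b hb => Or.inr (hT' a ha b hb)
    · exact Or.inr fun a ha b hb H => H.elim (hS' a ha b hb) (hT' a ha b hb)

/-- Median lemma. -/
theorem exists_median [DecidableEq α] (A : Finset α) (f : α → ℤ) :
    ∃ v : ℤ, A.card ≤ 2 * (A.filter fun a => f a ≤ v).card ∧
      A.card ≤ 2 * (A.filter fun a => v ≤ f a).card := by
  classical
  rcases A.eq_empty_or_nonempty with rfl | hA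
  · exact ⟨0, by simp⟩
  set k := (A.card + 1) / 2 with hk
  have hk1 : 1 ≤ k := by have := hA.card_pos; omega
  have hbdd : ∃ b : ℤ, ∀ z : ℤ, k ≤ (A.filter fun a => f a ≤ z).card → b ≤ z := by
    refine ⟨A.inf' hA f, fun z hz => ?_⟩
    have hne : (A.filter fun a => f a ≤ z).Nonempty := card_pos.mp (by omega)
    obtain ⟨a, ha⟩ := hne
    simp only [mem_filter] at ha
    exact le_trans (Finset.inf'_le f ha.1) ha.2
  have hinh : ∃ z : ℤ, k ≤ (A.filter fun a => f a ≤ z).card := by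
    refine ⟨A.sup' hA f, ?_⟩
    have : A.filter (fun a => f a ≤ A.sup' hA f) = A :=
      filter_true_of_mem fun a ha => Finset.le_sup' f ha
    rw [this]; omega
  obtain ⟨v, hv, hvmin⟩ := Int.exists_least_of_bdd hbdd hinh
  refine ⟨v, by omega, ?_⟩
  have hlt : (A.filter fun a => f a ≤ v - 1).card < k := by
    by_contra h
    have := hvmin (v - 1) (by omega)
    omega
  have hsplit := Finset.card_filter_add_card_filter_not
    (s := A) (p := fun a => f a ≤ v - 1)
  have heq : (A.filter fun a => ¬ (f a ≤ v - 1)) = A.filter fun a => v ≤ f a := by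
    apply filter_congr; intro a _; constructor <;> intro <;> omega
  rw [heq] at hsplit
  omega

/-- Pigeonhole for congruence classes. -/
theorem exists_big_fiber [DecidableEq α] (A : Finset α) (f : α → ℤ) {d : ℤ} (hd : 1 ≤ d) :
    ∃ r : ℤ, (A.card : ℤ) ≤ d * (A.filter fun a => f a % d = r).card := by
  classical
  rcases A.eq_empty_or_nonempty with rfl | hA
  · exact ⟨0, by simp⟩
  set e := d.toNat with he
  have he1 : 1 ≤ e := by omega
  set nn := (A.card - 1) / e with hnn
  have hmaps : ∀ a ∈ A, f a % d ∈ Finset.Ico (0 : ℤ) d := by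
    intro a _
    simp only [Finset.mem_Ico]
    exact ⟨Int.emod_nonneg _ (by omega), Int.emod_lt_of_pos _ (by omega)⟩
  have hcard : (Finset.Ico (0 : ℤ) d).card = e := by
    rw [Int.card_Ico]; simp [he]
  have h1 : e * nn ≤ A.card - 1 := by
    rw [mul_comm]; exact Nat.div_mul_le_self _ _
  have hlt : (Finset.Ico (0 : ℤ) d).card * nn < A.card := by
    rw [hcard]
    exact lt_of_le_of_lt h1 (Nat.sub_lt hA.card_pos one_pos)
  obtain ⟨r, _, hr⟩ := Finset.exists_lt_card_fiber_of_mul_lt_card_of_maps_to hmaps hlt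
  refine ⟨r, ?_⟩
  have h2 : A.card ≤ e * (nn + 1) := by
    have hdm : e * nn + (A.card - 1) % e = A.card - 1 := Nat.div_add_mod (A.card - 1) e
    have hm : (A.card - 1) % e < e := Nat.mod_lt _ (by omega)
    have hApos := hA.card_pos
    calc A.card ≤ e * nn + ((A.card - 1) % e + 1) := by
          rw [← Nat.add_assoc, hdm]; omega
      _ ≤ e * nn + e := Nat.add_le_add_left hm _
      _ = e * (nn + 1) := by ring
  have h3 : nn + 1 ≤ (A.filter fun a => f a % d = r).card := hr
  have : (A.card : ℤ) ≤ (e : ℤ) * ((A.filter fun a => f a % d = r).card : ℤ) := by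
    calc (A.card : ℤ) ≤ (e : ℤ) * (nn + 1 : ℕ) := by exact_mod_cast h2
      _ ≤ _ := by
          apply mul_le_mul_of_nonneg_left _ (by positivity)
          exact_mod_cast h3
  calc (A.card : ℤ) ≤ (e : ℤ) * _ := this
    _ = d * _ := by rw [he]; norm_num [Int.toNat_of_nonneg (by omega : (0:ℤ) ≤ d)]

end SEH

section Atoms
variable {α β : Type*} [DecidableEq α] [DecidableEq β]

theorem seh_ineq (f : α → ℤ) (g : β → ℤ) (a₀ : ℤ) :
    SEH {z : α × β | a₀ < f z.1 + g z.2} := by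
  refine ⟨1/2, by norm_num, fun A B => ?_⟩
  obtain ⟨v, hv1, hv2⟩ := exists_median A f
  obtain ⟨w, hw1, hw2⟩ := exists_median B g
  by_cases hc : a₀ < v + w
  · refine ⟨A.filter fun a => v ≤ f a, filter_subset _ _,
      B.filter fun b => w ≤ g b, filter_subset _ _, ?_, ?_, Or.inl ?_⟩
    · have h' : ((A.card:ℝ) ≤ 2 * ((A.filter fun a => v ≤ f a).card : ℝ)) := by exact_mod_cast hv2
      linarith
    · have h' : ((B.card:ℝ) ≤ 2 * ((B.filter fun b => w ≤ g b).card : ℝ)) := by exact_mod_cast hw2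
      linarith
    · intro a ha b hb
      simp only [mem_filter] at ha hb
      simp only [Set.mem_setOf_eq]
      omega
  · refine ⟨A.filter fun a => f a ≤ v, filter_subset _ _,
      B.filter fun b => g b ≤ w, filter_subset _ _, ?_, ?_, Or.inr ?_⟩
    · have h' : ((A.card:ℝ) ≤ 2 * ((A.filter fun a => f a ≤ v).card : ℝ)) := by exact_mod_cast hv1
      linarith
    · have h' : ((B.card:ℝ) ≤ 2 * ((B.filter fun b => g b ≤ w).card : ℝ)) := by exact_mod_cast hw1
      linarith
    · intro a ha b hb
      simp only [mem_filter] at ha hb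
      simp only [Set.mem_setOf_eq]
      omega

theorem seh_cong (f : α → ℤ) (g : β → ℤ) (a₀ : ℤ) {d : ℤ} (hd : 1 ≤ d) :
    SEH {z : α × β | f z.1 + g z.2 ≡ a₀ [ZMOD d]} := by
  refine ⟨(d : ℝ)⁻¹, by positivity, fun A B => ?_⟩
  obtain ⟨r, hr⟩ := exists_big_fiber A f hd
  obtain ⟨s, hs⟩ := exists_big_fiber B g hd
  have hd0 : (0 : ℝ) < (d : ℝ) := by exact_mod_cast hd.trans_lt' (by norm_num)
  refine ⟨A.filter fun a => f a % d = r, filter_subset _ _,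
    B.filter fun b => g b % d = s, filter_subset _ _, ?_, ?_, ?_⟩
  · rw [inv_mul_le_iff₀ hd0]; exact_mod_cast hr
  · rw [inv_mul_le_iff₀ hd0]; exact_mod_cast hs
  · have key : ∀ a ∈ A.filter fun a => f a % d = r, ∀ b ∈ B.filter fun b => g b % d = s,
        ((f a + g b ≡ a₀ [ZMOD d]) ↔ ((r + s) % d = a₀ % d)) := by
      intro a ha b hb
      simp only [mem_filter] at ha hb
      unfold Int.ModEq
      rw [Int.add_emod, ha.2, hb.2]
    by_cases hrs : (r + s) % d = a₀ % d
    · exact Or.inl fun a ha b hb => (key a ha b hb).mpr hrs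
    · exact Or.inr fun a ha b hb H => hrs ((key a ha b hb).mp H)

theorem seh_eq (f : α → ℤ) (g : β → ℤ) (a₀ : ℤ) :
    SEH {z : α × β | f z.1 + g z.2 = a₀} := by
  have h : {z : α × β | f z.1 + g z.2 = a₀} =
      {z : α × β | a₀ - 1 < f z.1 + g z.2} ∩ {z : α × β | a₀ < f z.1 + g z.2}ᶜ := by
    ext z
    simp only [Set.mem_setOf_eq, Set.mem_inter_iff, Set.mem_compl_iff]
    omega
  rw [h]
  exact (seh_ineq f g (a₀ - 1)).inter (seh_ineq f g a₀).compl

end Atoms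


/-- Strong Erdős–Hajnal for Presburger-definable relations on `ℤ^n × ℤ^m`: Boolean combinations
of linear equalities, linear inequalities, and congruences. -/
theorem stmt_13 (n m : ℕ) (R : Set ((Fin n → ℤ) × (Fin m → ℤ)))
    (hR : BoolComb
      {S | ∃ (a : Fin n ⊕ Fin m → ℤ) (a₀ : ℤ),
        S = {z | ∑ i, a i * Sum.elim z.1 z.2 i = a₀} ∨
        S = {z | a₀ < ∑ i, a i * Sum.elim z.1 z.2 i} ∨
        ∃ d : ℤ, 1 ≤ d ∧ S = {z | ∑ i, a i * Sum.elim z.1 z.2 i ≡ a₀ [ZMOD d]}} R) :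
    ∃ δ : ℝ, 0 < δ ∧
      ∀ (A : Finset (Fin n → ℤ)) (B : Finset (Fin m → ℤ)),
        ∃ A₀ ⊆ A, ∃ B₀ ⊆ B,
          δ * (A.card : ℝ) ≤ (A₀.card : ℝ) ∧ δ * (B.card : ℝ) ≤ (B₀.card : ℝ) ∧
          ((∀ a ∈ A₀, ∀ b ∈ B₀, (a, b) ∈ R) ∨ (∀ a ∈ A₀, ∀ b ∈ B₀, (a, b) ∉ R)) := by
  have : SEH R := by
    induction hR with
    | basic s hs =>
      obtain ⟨a, a₀, hs⟩ := hs
      have hsum : ∀ z : (Fin n → ℤ) × (Fin m → ℤ),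
          ∑ i, a i * Sum.elim z.1 z.2 i =
            (∑ i, a (Sum.inl i) * z.1 i) + ∑ i, a (Sum.inr i) * z.2 i := by
        intro z
        rw [Fintype.sum_sum_type]
        rfl
      rcases hs with hs | hs | ⟨d, hd, hs⟩
      · have : s = {z : (Fin n → ℤ) × (Fin m → ℤ) |
            (∑ i, a (Sum.inl i) * z.1 i) + (∑ i, a (Sum.inr i) * z.2 i) = a₀} := by
          rw [hs]; ext z; simp [hsum z]
        rw [this]
        exact seh_eq (fun x : Fin n → ℤ => ∑ i, a (Sum.inl i) * x i) (fun y : Fin m → ℤ => ∑ i, a (Sum.inr i) * y i) a₀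
      · have : s = {z : (Fin n → ℤ) × (Fin m → ℤ) |
            a₀ < (∑ i, a (Sum.inl i) * z.1 i) + (∑ i, a (Sum.inr i) * z.2 i)} := by
          rw [hs]; ext z; simp [hsum z]
        rw [this]
        exact seh_ineq (fun x : Fin n → ℤ => ∑ i, a (Sum.inl i) * x i) (fun y : Fin m → ℤ => ∑ i, a (Sum.inr i) * y i) a₀
      · have : s = {z : (Fin n → ℤ) × (Fin m → ℤ) |
            (∑ i, a (Sum.inl i) * z.1 i) + (∑ i, a (Sum.inr i) * z.2 i) ≡ a₀ [ZMOD d]} := by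
          rw [hs]; ext z; simp [hsum z]
        rw [this]
        exact seh_cong (fun x : Fin n → ℤ => ∑ i, a (Sum.inl i) * x i) (fun y : Fin m → ℤ => ∑ i, a (Sum.inr i) * y i) a₀ hd
    | compl s _ ih => exact ih.compl
    | inter s t _ _ ihs iht => exact ihs.inter iht
    | union s t _ _ ihs iht => exact ihs.union iht
  exact this
end
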